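/- Let M be a finite rank-4 matroid and let T₁, T₂, T₃ be rank-2 flats of M with r(T₁∪T₂∪T₃) = 4 and r(Tᵢ∪Tⱼ) = 3 for all i ≠ j. If T₁ ∩ T₂ ≠ ∅, then T₁ ∩ T₂ ⊆ T₃. -/

import Mathlib

open Set Matroid
open scoped Matroid

namespace SMC

variable {α : Type*}

/-- The rank of a set `X` in a matroid `M`: the maximum cardinality of an
independent subset of `X` (intended for finite matroids). -/
noncomputable def rk (M : Matroid α) (X : Set α) : ℕ :=
  sSup {n | ∃ I, M.Indep I ∧ I ⊆ X ∧ I.ncard = n}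

/-- The rank of a matroid: the rank of its ground set. -/
noncomputable def rkM (M : Matroid α) : ℕ := rk M M.E

/-- The modular defect of a pair of sets:
`r(X) + r(Y) - r(X ∪ Y) - r(X ∩ Y)` (a natural number). -/
noncomputable def pairDefect (M : Matroid α) (X Y : Set α) : ℕ :=
  rk M X + rk M Y - rk M (X ∪ Y) - rk M (X ∩ Y)

/-- A pair of sets is a modular pair if its modular defect is zero. -/
def ModularPair (M : Matroid α) (X Y : Set α) : Prop := pairDefect M X Y = 0

/-- A matroid is modular if every pair of flats is a modular pair. -/
def Modular (M : Matroid α) : Prop :=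
  ∀ F L : Set α, M.IsFlat F → M.IsFlat L → ModularPair M F L

/-- A matroid (of rank at least 3) is hypermodular if every pair of flats of
rank `r(M) - 1` is a modular pair. -/
def Hypermodular (M : Matroid α) : Prop :=
  ∀ F L : Set α, M.IsFlat F → M.IsFlat L →
    rk M F + 1 = rkM M → rk M L + 1 = rkM M → ModularPair M F L

/-- A modular cut of `M`: a collection of flats that is upward closed and
closed under intersections of modular pairs. -/
def ModularCut (M : Matroid α) (𝓜 : Set (Set α)) : Prop :=
  (∀ F ∈ 𝓜, M.IsFlat F) ∧
  (∀ L ∈ 𝓜, ∀ F : Set α, M.IsFlat F → L ⊆ F → F ∈ 𝓜) ∧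
  (∀ F ∈ 𝓜, ∀ L ∈ 𝓜, ModularPair M F L → F ∩ L ∈ 𝓜)

/-- A principal modular cut: the collection of all flats containing some fixed flat. -/
def PrincipalCut (M : Matroid α) (𝓜 : Set (Set α)) : Prop :=
  ∃ F : Set α, M.IsFlat F ∧ 𝓜 = {L | M.IsFlat L ∧ F ⊆ L}

/-- The modular cut generated by a collection `S` of flats:
the smallest modular cut containing `S`. -/
def genCut (M : Matroid α) (S : Set (Set α)) : Set (Set α) :=
  ⋂₀ {𝓜 | ModularCut M 𝓜 ∧ S ⊆ 𝓜}

/-- A Vámos line arrangement in a rank-4 matroid: four pairwise disjoint rank-2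
flats, the union of any three of which has rank 4, with `r(T₀ ∪ T₁) = 3`,
`r(Tᵢ ∪ Lⱼ) = 3` for all `i, j`, and `r(L₀ ∪ L₁) = 4`. -/
def VamosQuad (M : Matroid α) (T₀ T₁ L₀ L₁ : Set α) : Prop :=
  M.IsFlat T₀ ∧ M.IsFlat T₁ ∧ M.IsFlat L₀ ∧ M.IsFlat L₁ ∧
  rk M T₀ = 2 ∧ rk M T₁ = 2 ∧ rk M L₀ = 2 ∧ rk M L₁ = 2 ∧
  Disjoint T₀ T₁ ∧ Disjoint T₀ L₀ ∧ Disjoint T₀ L₁ ∧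
  Disjoint T₁ L₀ ∧ Disjoint T₁ L₁ ∧ Disjoint L₀ L₁ ∧
  rk M (T₀ ∪ T₁ ∪ L₀) = 4 ∧ rk M (T₀ ∪ T₁ ∪ L₁) = 4 ∧
  rk M (T₀ ∪ L₀ ∪ L₁) = 4 ∧ rk M (T₁ ∪ L₀ ∪ L₁) = 4 ∧
  rk M (T₀ ∪ T₁) = 3 ∧
  rk M (T₀ ∪ L₀) = 3 ∧ rk M (T₀ ∪ L₁) = 3 ∧
  rk M (T₁ ∪ L₀) = 3 ∧ rk M (T₁ ∪ L₁) = 3 ∧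
  rk M (L₀ ∪ L₁) = 4

/-- The modular defect of a matroid: the sum of the modular defects of all
unordered pairs of flats (the sum over ordered pairs is twice this). -/
noncomputable def matroidDefect (M : Matroid α) : ℕ :=
  (∑ᶠ F ∈ {F | M.IsFlat F}, ∑ᶠ L ∈ {L | M.IsFlat L}, pairDefect M F L) / 2



section Aux

variable {M : Matroid α} {I J X Y : Set α}

lemma rk_bddAbove (hfin : M.E.Finite) (X : Set α) :
    BddAbove {n | ∃ I, M.Indep I ∧ I ⊆ X ∧ I.ncard = n} :=
  ⟨M.E.ncard, fun n ⟨I, hI, _, hn⟩ ↦ hn ▸ Set.ncard_le_ncard hI.subset_ground hfin⟩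

lemma ncard_le_rk (hfin : M.E.Finite) (hJ : M.Indep J) (hJX : J ⊆ X) :
    J.ncard ≤ rk M X :=
  le_csSup (rk_bddAbove hfin X) ⟨J, hJ, hJX, rfl⟩

lemma rk_eq_ncard (hfin : M.E.Finite) (hI : M.IsBasis I X) : rk M X = I.ncard := by
  refine le_antisymm (csSup_le ⟨0, ∅, M.empty_indep, empty_subset X, Set.ncard_empty α⟩ ?_)
    (ncard_le_rk hfin hI.indep hI.subset)
  rintro n ⟨J, hJ, hJX, rfl⟩
  obtain ⟨J', hJ', hJJ'⟩ := hJ.subset_isBasis_of_subset hJX hI.subset_ground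
  have h1 : J'.ncard = I.ncard := hJ'.restrict_isBase.ncard_eq_ncard_of_isBase hI.restrict_isBase
  calc J.ncard ≤ J'.ncard :=
        Set.ncard_le_ncard hJJ' (hfin.subset hJ'.indep.subset_ground)
    _ = I.ncard := h1

lemma rk_mono (hfin : M.E.Finite) (hXY : X ⊆ Y) (hY : Y ⊆ M.E) :
    rk M X ≤ rk M Y := by
  obtain ⟨I, hI⟩ := M.exists_isBasis X (hXY.trans hY)
  rw [rk_eq_ncard hfin hI]
  exact ncard_le_rk hfin hI.indep (hI.subset.trans hXY)

lemma rk_submod (hfin : M.E.Finite) (hX : X ⊆ M.E) (hY : Y ⊆ M.E) :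
    rk M (X ∪ Y) + rk M (X ∩ Y) ≤ rk M X + rk M Y := by
  obtain ⟨I, hI⟩ := M.exists_isBasis (X ∩ Y) ((Set.inter_subset_left).trans hX)
  obtain ⟨J, hJ, hIJ⟩ := hI.indep.subset_isBasis_of_subset
    (hI.subset.trans ((Set.inter_subset_left).trans subset_union_left))
    (union_subset hX hY)
  have hJfin : J.Finite := hfin.subset hJ.indep.subset_ground
  have hIeq : I = J ∩ (X ∩ Y) := by
    refine hI.eq_of_subset_indep (hJ.indep.subset Set.inter_subset_left)
      (subset_inter hIJ hI.subset) Set.inter_subset_right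
  have hJXY : (J ∩ X) ∪ (J ∩ Y) = J := by
    rw [← Set.inter_union_distrib_left, Set.inter_eq_left.2 hJ.subset]
  have hJX : (J ∩ X) ∩ (J ∩ Y) = I := by
    rw [hIeq]; ext a; simp [Set.mem_inter_iff]; tauto
  have hcard : (J ∩ X).ncard + (J ∩ Y).ncard = J.ncard + I.ncard := by
    have h := Set.ncard_union_add_ncard_inter (J ∩ X) (J ∩ Y)
      (hJfin.inter_of_left X) (hJfin.inter_of_left Y)
    rw [hJXY, hJX] at h
    omega
  rw [rk_eq_ncard hfin hJ, rk_eq_ncard hfin hI]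
  calc J.ncard + I.ncard = (J ∩ X).ncard + (J ∩ Y).ncard := hcard.symm
    _ ≤ rk M X + rk M Y := add_le_add
        (ncard_le_rk hfin (hJ.indep.subset Set.inter_subset_left) Set.inter_subset_right)
        (ncard_le_rk hfin (hJ.indep.subset Set.inter_subset_left) Set.inter_subset_right)

end Aux

/-- In a finite rank-4 matroid, if T₁, T₂, T₃ are rank-2 flats
with r(T₁ ∪ T₂ ∪ T₃) = 4 and r(Tᵢ ∪ Tⱼ) = 3 for i ≠ j, and T₁ ∩ T₂ ≠ ∅, then
T₁ ∩ T₂ ⊆ T₃. -/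
theorem statement_11 {α : Type*} (M : Matroid α) (hfin : M.E.Finite)
    (hrk : rkM M = 4) (T₁ T₂ T₃ : Set α)
    (h₁ : M.IsFlat T₁) (h₂ : M.IsFlat T₂) (h₃ : M.IsFlat T₃)
    (hr₁ : rk M T₁ = 2) (hr₂ : rk M T₂ = 2) (hr₃ : rk M T₃ = 2)
    (hall : rk M (T₁ ∪ T₂ ∪ T₃) = 4)
    (h₁₂ : rk M (T₁ ∪ T₂) = 3) (h₁₃ : rk M (T₁ ∪ T₃) = 3)
    (h₂₃ : rk M (T₂ ∪ T₃) = 3)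
    (hne : (T₁ ∩ T₂).Nonempty) :
    T₁ ∩ T₂ ⊆ T₃ := by
  intro x hx
  have hE1 : T₁ ⊆ M.E := h₁.subset_ground
  have hE2 : T₂ ⊆ M.E := h₂.subset_ground
  have hE3 : T₃ ⊆ M.E := h₃.subset_ground
  have hxE : x ∈ M.E := hE1 hx.1
  -- submodularity for A = T₁ ∪ T₃, B = T₂ ∪ T₃
  have hsub := rk_submod (M := M) hfin (X := T₁ ∪ T₃) (Y := T₂ ∪ T₃)
    (union_subset hE1 hE3) (union_subset hE2 hE3)
  have hUeq : (T₁ ∪ T₃) ∪ (T₂ ∪ T₃) = T₁ ∪ T₂ ∪ T₃ := by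
    ext a; simp [Set.mem_union]; tauto
  rw [hUeq, hall, h₁₃, h₂₃] at hsub
  have hintrk : rk M ((T₁ ∪ T₃) ∩ (T₂ ∪ T₃)) ≤ 2 := by omega
  have hins : insert x T₃ ⊆ (T₁ ∪ T₃) ∩ (T₂ ∪ T₃) := by
    refine insert_subset ⟨Or.inl hx.1, Or.inl hx.2⟩ (subset_inter subset_union_right subset_union_right)
  have hins_rk : rk M (insert x T₃) ≤ 2 :=
    le_trans (rk_mono hfin hins (inter_subset_left.trans (union_subset hE1 hE3))) hintrk
  -- basis of T₃
  obtain ⟨I, hI⟩ := M.exists_isBasis T₃ hE3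
  have hIcard : I.ncard = 2 := by rw [← rk_eq_ncard hfin hI, hr₃]
  by_contra hxT3
  have hxI : x ∉ I := fun h ↦ hxT3 (hI.subset h)
  by_cases hind : M.Indep (insert x I)
  · have h3 : (insert x I).ncard = 3 := by
      rw [Set.ncard_insert_of_notMem hxI (hfin.subset hI.indep.subset_ground), hIcard]
    have := ncard_le_rk hfin hind (insert_subset_insert hI.subset)
    omega
  · have hxcl : x ∈ M.closure I := by
      rw [hI.indep.mem_closure_iff]
      exact Or.inl ⟨hind, insert_subset hxE hI.indep.subset_ground⟩
    rw [hI.closure_eq_closure, h₃.closure] at hxcl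
    exact hxT3 hxcl


end SMC
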